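/- arXiv:1306.2729 — 2 statements merged into one kernel-verified Lean document; each statement's English description precedes it below -/
import Mathlib

section
/- Let A be the free abelian group of rank d (realized as Fin d → ℤ, written multiplicatively) and let χ : A → ℂˣ be a nontrivial group homomorphism. Then the group cohomology H^i(A, ℂ_χ) of A with coefficients in the one-dimensional representation ℂ_χ vanishes for every i ≥ 0. -/
/-- The one-dimensional representation of a group `G` on `ℂ` in which `g : G` acts by
multiplication by `χ g`, for a group homomorphism `χ : G →* ℂˣ`. -/
noncomputable def charRep {G : Type} [Group G] (χ : G →* ℂˣ) : Rep ℂ G :=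
  Rep.of (((Algebra.lmul ℂ ℂ).toMonoidHom.comp ((Units.coeHom ℂ).comp χ) :
    G →* (ℂ →ₗ[ℂ] ℂ)))

open Fin Finset CategoryTheory CategoryTheory.Limits

section FinLemmas

variable {α : Type*} [CommMonoid α] {n : ℕ} (s : α) (x : Fin (n + 1) → α)

lemma contract_insert_last :
    contractNth (last (n + 1)) (· * ·) (insertNth (last (n + 1)) s x) = x := by
  funext k
  rw [contractNth_apply_of_lt _ _ _ _ (by simpa using k.isLt), ← succAbove_last_apply,
    insertNth_apply_succAbove]

lemma contract_insert_diag (i : Fin (n + 1)) :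
    contractNth i.castSucc (· * ·) (insertNth i.castSucc s x)
      = contractNth i.castSucc (· * ·) (insertNth i.succ s x) := by
  funext k
  rcases lt_trichotomy (k : ℕ) (i : ℕ) with h | h | h
  · have h1 : (insertNth i.castSucc s x : Fin (n+2) → α) (castSucc k) = x k := by
      rw [← succAbove_of_castSucc_lt i.castSucc k (by simpa using h), insertNth_apply_succAbove]
    have h2 : (insertNth i.succ s x : Fin (n+2) → α) (castSucc k) = x k := by
      rw [← succAbove_of_castSucc_lt i.succ k (by simp [castSucc_lt_succ_iff]; omega),
        insertNth_apply_succAbove]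
    rw [contractNth_apply_of_lt _ _ _ _ (by simpa using h),
      contractNth_apply_of_lt _ _ _ _ (by simpa using h), h1, h2]
  · have hk : k = i := Fin.ext h
    subst hk
    have h1 : (insertNth k.castSucc s x : Fin (n+2) → α) (succ k) = x k := by
      rw [← succAbove_of_le_castSucc k.castSucc k le_rfl, insertNth_apply_succAbove]
    have h2 : (insertNth k.succ s x : Fin (n+2) → α) (castSucc k) = x k := by
      rw [← succAbove_of_castSucc_lt k.succ k castSucc_lt_succ, insertNth_apply_succAbove]
    rw [contractNth_apply_of_eq _ _ _ _ (by simp),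
      contractNth_apply_of_eq _ _ _ _ (by simp), h1, h2,
      insertNth_apply_same, insertNth_apply_same, mul_comm]
  · have h1 : (insertNth i.castSucc s x : Fin (n+2) → α) (succ k) = x k := by
      rw [← succAbove_of_le_castSucc i.castSucc k (by simpa using h.le), insertNth_apply_succAbove]
    have h2 : (insertNth i.succ s x : Fin (n+2) → α) (succ k) = x k := by
      rw [← succAbove_of_le_castSucc i.succ k (by simp [succ_le_castSucc_iff]; omega),
        insertNth_apply_succAbove]
    rw [contractNth_apply_of_gt _ _ _ _ (by simpa using h),
      contractNth_apply_of_gt _ _ _ _ (by simpa using h), h1, h2]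



lemma contract_insert_of_le (i j : Fin (n + 1)) (hij : i ≤ j) :
    contractNth j.succ (· * ·) (insertNth i.castSucc s x)
      = insertNth i s (contractNth j (· * ·) x) := by
  have hij' : (i : ℕ) ≤ (j : ℕ) := hij
  rw [eq_insertNth_iff]
  constructor
  · rw [contractNth_apply_of_lt _ _ _ _ (show ((i : Fin (n+1)) : ℕ) < (j.succ : ℕ) by
      simp only [val_succ]; omega)]
    exact insertNth_apply_same _ _ _
  · funext q
    show contractNth j.succ (· * ·) (insertNth i.castSucc s x) (i.succAbove q)
      = contractNth j (· * ·) x q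
    rcases lt_or_ge (castSucc q) i with hq | hq
    · have hq' : (q : ℕ) < (i : ℕ) := hq
      rw [succAbove_of_castSucc_lt _ _ hq]
      rw [contractNth_apply_of_lt _ _ _ _ (show ((castSucc q : Fin (n+1)) : ℕ) < (j.succ : ℕ) by
        simp only [coe_castSucc, val_succ]; omega)]
      have h2 : (insertNth i.castSucc s x : Fin (n + 2) → α) (castSucc (castSucc q))
          = x (castSucc q) := by
        rw [← succAbove_of_castSucc_lt i.castSucc (castSucc q) (by
          rw [Fin.lt_def]; simp only [coe_castSucc]; omega), insertNth_apply_succAbove]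
      rw [h2, contractNth_apply_of_lt _ _ _ _ (show (q : ℕ) < (j : ℕ) by omega)]
    · have hq' : (i : ℕ) ≤ (q : ℕ) := hq
      rw [succAbove_of_le_castSucc _ _ hq]
      have h2 : (insertNth i.castSucc s x : Fin (n + 2) → α) (castSucc (succ q))
          = x (castSucc q) := by
        rw [← succ_castSucc, ← succAbove_of_le_castSucc i.castSucc (castSucc q) (by
          rw [Fin.le_def]; simp only [coe_castSucc]; omega), insertNth_apply_succAbove]
      have h3 : (insertNth i.castSucc s x : Fin (n + 2) → α) (succ (succ q)) = x (succ q) := by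
        rw [← succAbove_of_le_castSucc i.castSucc (succ q) (by
          rw [Fin.le_def]; simp only [coe_castSucc, val_succ]; omega), insertNth_apply_succAbove]
      rcases lt_trichotomy (q : ℕ) (j : ℕ) with h | h | h
      · rw [contractNth_apply_of_lt _ _ _ _ (show ((succ q : Fin (n+1)) : ℕ) < (j.succ : ℕ) by
          simp only [val_succ]; omega), h2, contractNth_apply_of_lt _ _ _ _ h]
      · rw [contractNth_apply_of_eq _ _ _ _ (show ((succ q : Fin (n+1)) : ℕ) = (j.succ : ℕ) by
          simp only [val_succ]; omega), h2, h3, contractNth_apply_of_eq _ _ _ _ h]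
      · rw [contractNth_apply_of_gt _ _ _ _ (show (j.succ : ℕ) < ((succ q : Fin (n+1)) : ℕ) by
          simp only [val_succ]; omega), h3, contractNth_apply_of_gt _ _ _ _ h]

lemma contract_insert_of_gt (i j : Fin (n + 1)) (hij : j < i) :
    contractNth j.castSucc (· * ·) (insertNth i.succ s x)
      = insertNth i s (contractNth j (· * ·) x) := by
  have hij' : (j : ℕ) < (i : ℕ) := hij
  rw [eq_insertNth_iff]
  constructor
  · rw [contractNth_apply_of_gt _ _ _ _ (show ((j.castSucc : Fin (n+2)) : ℕ) < ((i : Fin (n+1)) : ℕ) by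
      simp only [coe_castSucc]; omega)]
    exact insertNth_apply_same _ _ _
  · funext q
    show contractNth j.castSucc (· * ·) (insertNth i.succ s x) (i.succAbove q)
      = contractNth j (· * ·) x q
    rcases lt_or_ge (castSucc q) i with hq | hq
    · have hq' : (q : ℕ) < (i : ℕ) := hq
      rw [succAbove_of_castSucc_lt _ _ hq]
      have h2 : (insertNth i.succ s x : Fin (n + 2) → α) (castSucc (castSucc q))
          = x (castSucc q) := by
        rw [← succAbove_of_castSucc_lt i.succ (castSucc q) (by
          rw [Fin.lt_def]; simp only [coe_castSucc, val_succ]; omega), insertNth_apply_succAbove]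
      have h3 : (insertNth i.succ s x : Fin (n + 2) → α) (succ (castSucc q)) = x (succ q) := by
        rw [succ_castSucc, ← succAbove_of_castSucc_lt i.succ (succ q) (by
          rw [Fin.lt_def]; simp only [coe_castSucc, val_succ]; omega), insertNth_apply_succAbove]
      rcases lt_trichotomy (q : ℕ) (j : ℕ) with h | h | h
      · rw [contractNth_apply_of_lt _ _ _ _ (show ((castSucc q : Fin (n+1)) : ℕ) < (j.castSucc : ℕ) by
          simp only [coe_castSucc]; omega), h2, contractNth_apply_of_lt _ _ _ _ h]
      · rw [contractNth_apply_of_eq _ _ _ _ (show ((castSucc q : Fin (n+1)) : ℕ) = (j.castSucc : ℕ) by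
          simp only [coe_castSucc]; omega), h2, h3, contractNth_apply_of_eq _ _ _ _ h]
      · rw [contractNth_apply_of_gt _ _ _ _ (show (j.castSucc : ℕ) < ((castSucc q : Fin (n+1)) : ℕ) by
          simp only [coe_castSucc]; omega), h3, contractNth_apply_of_gt _ _ _ _ h]
    · have hq' : (i : ℕ) ≤ (q : ℕ) := hq
      rw [succAbove_of_le_castSucc _ _ hq]
      have h3 : (insertNth i.succ s x : Fin (n + 2) → α) (succ (succ q)) = x (succ q) := by
        rw [← succAbove_of_le_castSucc i.succ (succ q) (by
          rw [Fin.le_def]; simp only [coe_castSucc, val_succ]; omega), insertNth_apply_succAbove]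
      rw [contractNth_apply_of_gt _ _ _ _ (show (j.castSucc : ℕ) < ((succ q : Fin (n+1)) : ℕ) by
        simp only [coe_castSucc, val_succ]; omega), h3,
        contractNth_apply_of_gt _ _ _ _ (show (j : ℕ) < (q : ℕ) by omega)]


lemma insert_succ_head (i : Fin (n + 1)) :
    (insertNth i.succ s x : Fin (n + 2) → α) 0 = x 0 := by
  rw [show (0 : Fin (n + 2)) = (i.succ).succAbove (0 : Fin (n + 1)) by
    rw [succAbove_of_castSucc_lt _ _ (by rw [Fin.lt_def]; simp), castSucc_zero],
    insertNth_apply_succAbove]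

lemma insert_succ_tail (i : Fin (n + 1)) :
    Fin.tail (insertNth i.succ s x : Fin (n + 2) → α) = insertNth i s (Fin.tail x) := by
  rw [eq_insertNth_iff]
  constructor
  · show (insertNth i.succ s x : Fin (n + 2) → α) i.succ = s
    exact insertNth_apply_same _ _ _
  · funext q
    show (insertNth i.succ s x : Fin (n + 2) → α) (succ (i.succAbove q)) = Fin.tail x q
    rw [← succ_succAbove_succ, insertNth_apply_succAbove]
    rfl

lemma key_sum (φ : (Fin (n + 1) → α) → ℂ) :
    ∑ i : Fin (n + 2), ∑ j : Fin (n + 2),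
      (-1 : ℂ) ^ ((i : ℕ) + (j : ℕ)) * φ (contractNth j (· * ·) (insertNth i s x))
    = φ x - ∑ j : Fin (n + 1), ∑ i : Fin (n + 1),
        (-1 : ℂ) ^ ((i : ℕ) + (j : ℕ)) * φ (insertNth i s (contractNth j (· * ·) x)) := by
  set t : Fin (n + 2) → Fin (n + 2) → ℂ := fun i j =>
    (-1 : ℂ) ^ ((i : ℕ) + (j : ℕ)) * φ (contractNth j (· * ·) (insertNth i s x)) with ht
  have h1 : ∀ i : Fin (n + 2), ∑ j, t i j = t i i + ∑ j' : Fin (n + 1), t i (i.succAbove j') :=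
    fun i => Fin.sum_univ_succAbove (t i) i
  rw [Finset.sum_congr rfl (fun i _ => h1 i), Finset.sum_add_distrib]
  have hdiag : ∑ i : Fin (n + 2), t i i
      = (∑ i' : Fin (n + 1), φ (contractNth i'.castSucc (· * ·) (insertNth i'.succ s x))) + φ x := by
    rw [Fin.sum_univ_castSucc]
    congr 1
    · refine Finset.sum_congr rfl fun i' _ => ?_
      rw [ht]
      simp only [coe_castSucc]
      rw [Even.neg_one_pow ⟨(i' : ℕ), rfl⟩, one_mul, contract_insert_diag]
    · rw [ht]
      simp only [val_last]
      rw [Even.neg_one_pow ⟨n + 1, rfl⟩, one_mul, contract_insert_last]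
  have hoff : ∑ i : Fin (n + 2), ∑ j' : Fin (n + 1), t i (i.succAbove j')
      = (- ∑ j' : Fin (n + 1), φ (contractNth j'.castSucc (· * ·) (insertNth j'.succ s x)))
        - ∑ j' : Fin (n + 1), ∑ i' : Fin (n + 1),
            (-1 : ℂ) ^ ((i' : ℕ) + (j' : ℕ)) * φ (insertNth i' s (contractNth j' (· * ·) x)) := by
    rw [Finset.sum_comm]
    have h2 : ∀ j' : Fin (n + 1), ∑ i : Fin (n + 2), t i (i.succAbove j')
        = (- φ (contractNth j'.castSucc (· * ·) (insertNth j'.succ s x)))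
          - ∑ i' : Fin (n + 1),
              (-1 : ℂ) ^ ((i' : ℕ) + (j' : ℕ)) * φ (insertNth i' s (contractNth j' (· * ·) x)) := by
      intro j'
      rw [Fin.sum_univ_succAbove (fun i => t i (i.succAbove j')) j'.succ]
      have hp : (j'.succ).succAbove j' = castSucc j' := succAbove_of_castSucc_lt _ _ castSucc_lt_succ
      have h3 : ∀ i' : Fin (n + 1), t ((j'.succ).succAbove i') (((j'.succ).succAbove i').succAbove j')
          = -((-1 : ℂ) ^ ((i' : ℕ) + (j' : ℕ)) * φ (insertNth i' s (contractNth j' (· * ·) x))) := by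
        intro i'
        rcases le_or_gt i' j' with h | h
        · have h' : (i' : ℕ) ≤ (j' : ℕ) := h
          have e1 : (j'.succ).succAbove i' = castSucc i' :=
            succAbove_of_castSucc_lt _ _ (by rw [Fin.lt_def]; simp only [coe_castSucc, val_succ]; omega)
          rw [e1]
          have e2 : (castSucc i').succAbove j' = succ j' :=
            succAbove_of_le_castSucc _ _ (by rw [Fin.le_def]; simp only [coe_castSucc]; omega)
          rw [e2, ht]
          dsimp only
          rw [contract_insert_of_le s x i' j' h]
          simp only [coe_castSucc, val_succ]
          rw [show (i' : ℕ) + ((j' : ℕ) + 1) = ((i' : ℕ) + (j' : ℕ)) + 1 by ring, pow_succ]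
          ring
        · have h' : (j' : ℕ) < (i' : ℕ) := h
          have e1 : (j'.succ).succAbove i' = succ i' :=
            succAbove_of_le_castSucc _ _ (by rw [Fin.le_def]; simp only [coe_castSucc, val_succ]; omega)
          rw [e1]
          have e2 : (succ i').succAbove j' = castSucc j' :=
            succAbove_of_castSucc_lt _ _ (by rw [Fin.lt_def]; simp only [coe_castSucc, val_succ]; omega)
          rw [e2, ht]
          dsimp only
          rw [contract_insert_of_gt s x i' j' h]
          simp only [coe_castSucc, val_succ]
          rw [show (i' : ℕ) + 1 + (j' : ℕ) = ((i' : ℕ) + (j' : ℕ)) + 1 by ring, pow_succ]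
          ring
      rw [Finset.sum_congr rfl (fun i' _ => h3 i'), hp, ht]
      dsimp only
      simp only [val_succ, coe_castSucc]
      rw [show (j' : ℕ) + 1 + (j' : ℕ) = 2 * (j' : ℕ) + 1 by ring,
        Odd.neg_one_pow ⟨(j' : ℕ), rfl⟩, Finset.sum_neg_distrib]
      ring
    rw [Finset.sum_congr rfl (fun j' _ => h2 j'), Finset.sum_sub_distrib, Finset.sum_neg_distrib]
  rw [hdiag, hoff]
  ring

end FinLemmas

section Core

variable {G : Type} [CommGroup G] (χ : G →* ℂˣ) (s : G)

noncomputable def dfun (n : ℕ) (φ : (Fin n → G) → ℂ) (g : Fin (n + 1) → G) : ℂ :=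
  (χ (g 0) : ℂ) * φ (fun i => g i.succ) +
    ∑ j : Fin (n + 1), (-1 : ℂ) ^ ((j : ℕ) + 1) * φ (Fin.contractNth j (· * ·) g)

noncomputable def hfun (n : ℕ) (ψ : (Fin (n + 1) → G) → ℂ) (x : Fin n → G) : ℂ :=
  ∑ i : Fin (n + 1), (-1 : ℂ) ^ (i : ℕ) * (((χ s)⁻¹ : ℂˣ) : ℂ) * ψ (Fin.insertNth i s x)

lemma unit_cancel : (((χ s)⁻¹ : ℂˣ) : ℂ) * (χ s : ℂ) = 1 := by
  rw [← Units.val_mul, inv_mul_cancel, Units.val_one]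

lemma core_zero (φ : (Fin 0 → G) → ℂ) (x : Fin 0 → G) :
    hfun χ s 0 (dfun χ 0 φ) x + (((χ s)⁻¹ : ℂˣ) : ℂ) * φ x = φ x := by
  have hx : ∀ y : Fin 0 → G, y = x := fun y => funext fun k => k.elim0
  simp only [hfun, dfun]
  rw [Fin.sum_univ_one, Fin.sum_univ_one]
  have hφ : ∀ y : Fin 0 → G, φ y = φ x := fun y => congrArg φ (hx y)
  simp only [hφ]
  have h0 : (Fin.insertNth (0 : Fin 1) s x : Fin 1 → G) 0 = s := Fin.insertNth_apply_same _ _ _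
  rw [h0]
  simp only [Fin.val_zero, pow_zero, pow_one, one_mul]
  linear_combination φ x * unit_cancel χ s

lemma core_succ (n : ℕ) (φ : (Fin (n + 1) → G) → ℂ) (x : Fin (n + 1) → G) :
    hfun χ s (n + 1) (dfun χ (n + 1) φ) x + dfun χ n (hfun χ s n φ) x
      + (((χ s)⁻¹ : ℂˣ) : ℂ) * φ x = φ x := by
  have hA : hfun χ s (n + 1) (dfun χ (n + 1) φ) x
      = (φ x - (χ (x 0) : ℂ) * hfun χ s n φ (Fin.tail x))
        + (-(((χ s)⁻¹ : ℂˣ) : ℂ) * (φ x - ∑ j : Fin (n + 1), ∑ i : Fin (n + 1),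
            (-1 : ℂ) ^ ((i : ℕ) + (j : ℕ)) *
              φ (Fin.insertNth i s (Fin.contractNth j (· * ·) x)))) := by
    simp only [hfun, dfun]
    simp only [mul_add, Finset.sum_add_distrib]
    congr 1
    · -- first part
      rw [Fin.sum_univ_succ]
      have h0 : (-1 : ℂ) ^ ((0 : Fin (n + 2)) : ℕ) * (((χ s)⁻¹ : ℂˣ) : ℂ) *
          ((χ ((Fin.insertNth (0 : Fin (n + 2)) s x : Fin (n + 2) → G) 0) : ℂ) *
            φ (fun i => (Fin.insertNth (0 : Fin (n + 2)) s x : Fin (n + 2) → G) i.succ))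
          = φ x := by
        have e0 : (Fin.insertNth (0 : Fin (n + 2)) s x : Fin (n + 2) → G) 0 = s :=
          Fin.insertNth_apply_same _ _ _
        have e1 : (fun i => (Fin.insertNth (0 : Fin (n + 2)) s x : Fin (n + 2) → G) i.succ)
            = x := by
          funext k
          show Fin.tail (Fin.insertNth (0 : Fin (n + 2)) s x : Fin (n + 2) → G) k = x k
          rw [Fin.insertNth_zero', Fin.tail_cons]
        rw [e0, e1]
        simp only [Fin.val_zero, pow_zero, one_mul]
        rw [← mul_assoc, unit_cancel χ s, one_mul]
      have hsucc : ∀ i' : Fin (n + 1), (-1 : ℂ) ^ ((i'.succ : Fin (n + 2)) : ℕ) *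
          (((χ s)⁻¹ : ℂˣ) : ℂ) *
          ((χ ((Fin.insertNth i'.succ s x : Fin (n + 2) → G) 0) : ℂ) *
            φ (fun i => (Fin.insertNth i'.succ s x : Fin (n + 2) → G) i.succ)) =
          (χ (x 0) : ℂ) * (-((-1 : ℂ) ^ ((i' : ℕ)) * (((χ s)⁻¹ : ℂˣ) : ℂ) *
            φ (Fin.insertNth i' s (Fin.tail x)))) := by
        intro i'
        have e0 := insert_succ_head s x i'
        have e1 : (fun i => (Fin.insertNth i'.succ s x : Fin (n + 2) → G) i.succ)
            = Fin.insertNth i' s (Fin.tail x) := insert_succ_tail s x i'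
        rw [e0, e1, Fin.val_succ, pow_succ]
        ring
      simp only [h0, hsucc]
      rw [← Finset.mul_sum, Finset.sum_neg_distrib]
      ring
    · -- second (double sum) part
      have hrw : ∀ i : Fin (n + 2), (-1 : ℂ) ^ ((i : ℕ)) * (((χ s)⁻¹ : ℂˣ) : ℂ) *
          (∑ j : Fin (n + 2), (-1 : ℂ) ^ ((j : ℕ) + 1) *
            φ (Fin.contractNth j (· * ·) (Fin.insertNth i s x)))
          = -(((χ s)⁻¹ : ℂˣ) : ℂ) * ∑ j : Fin (n + 2), (-1 : ℂ) ^ ((i : ℕ) + (j : ℕ)) *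
              φ (Fin.contractNth j (· * ·) (Fin.insertNth i s x)) := by
        intro i
        rw [Finset.mul_sum, Finset.mul_sum]
        refine Finset.sum_congr rfl fun j _ => ?_
        rw [pow_add, pow_succ]
        ring
      rw [Finset.sum_congr rfl (fun i _ => hrw i), ← Finset.mul_sum, key_sum s x φ]
  have hB : dfun χ n (hfun χ s n φ) x
      = (χ (x 0) : ℂ) * hfun χ s n φ (Fin.tail x)
        + (-(((χ s)⁻¹ : ℂˣ) : ℂ) * ∑ j : Fin (n + 1), ∑ i : Fin (n + 1),
            (-1 : ℂ) ^ ((i : ℕ) + (j : ℕ)) *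
              φ (Fin.insertNth i s (Fin.contractNth j (· * ·) x))) := by
    simp only [dfun]
    congr 1
    have hrw : ∀ j : Fin (n + 1), (-1 : ℂ) ^ ((j : ℕ) + 1) *
        (hfun χ s n φ (Fin.contractNth j (· * ·) x))
        = -(((χ s)⁻¹ : ℂˣ) : ℂ) * ∑ i : Fin (n + 1), (-1 : ℂ) ^ ((i : ℕ) + (j : ℕ)) *
            φ (Fin.insertNth i s (Fin.contractNth j (· * ·) x)) := by
      intro j
      simp only [hfun]
      rw [Finset.mul_sum, Finset.mul_sum]
      refine Finset.sum_congr rfl fun i _ => ?_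
      rw [pow_add, pow_succ]
      ring
    rw [Finset.sum_congr rfl (fun j _ => hrw j), ← Finset.mul_sum]
  rw [hA, hB]
  ring

end Core

section Glue

variable {G : Type} [CommGroup G] (χ : G →* ℂˣ) (s : G)

lemma charRep_ρ_apply (a : G) (v : ℂ) : ((charRep χ).ρ a) v = (χ a : ℂ) * v := rfl

lemma d_eq_dfun (n : ℕ) (φ : (Fin n → G) → ℂ) :
    inhomogeneousCochains.d (charRep χ) n φ = dfun χ n φ := by
  funext g
  rfl


/-- The homotopy component, as a linear map. -/
noncomputable def hLin (n : ℕ) :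
    ((Fin (n + 1) → G) → ℂ) →ₗ[ℂ] ((Fin n → G) → ℂ) where
  toFun ψ := hfun χ s n ψ
  map_add' ψ₁ ψ₂ := by
    funext x
    simp only [hfun, Pi.add_apply, mul_add, Finset.sum_add_distrib]
  map_smul' r ψ := by
    funext x
    simp only [hfun, Pi.smul_apply, smul_eq_mul, RingHom.id_apply, Finset.mul_sum]
    exact Finset.sum_congr rfl fun i _ => by ring

lemma hLin_apply (n : ℕ) (ψ : (Fin (n + 1) → G) → ℂ) : hLin χ s n ψ = hfun χ s n ψ := rfl

lemma final_zero (φ : (Fin 0 → G) → ℂ) (x : Fin 0 → G) :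
    φ x = hfun χ s 0 (dfun χ 0 φ) x + (((χ s)⁻¹ : ℂˣ) : ℂ) * φ x := by
  linear_combination -core_zero χ s φ x

lemma final_succ (k : ℕ) (φ : (Fin (k + 1) → G) → ℂ) (x : Fin (k + 1) → G) :
    φ x = hfun χ s (k + 1) (dfun χ (k + 1) φ) x + dfun χ k (hfun χ s k φ) x
      + (((χ s)⁻¹ : ℂˣ) : ℂ) * φ x := by
  linear_combination -core_succ χ s k φ x

/-- Components of the homotopy. -/
noncomputable def homAux (i j : ℕ) :
    (groupCohomology.inhomogeneousCochains (charRep χ)).X i ⟶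
      (groupCohomology.inhomogeneousCochains (charRep χ)).X j :=
  if h : i = j + 1 then
    eqToHom (congrArg (groupCohomology.inhomogeneousCochains (charRep χ)).X h) ≫
      ModuleCat.ofHom (hLin χ s j)
  else 0

lemma homAux_succ (n : ℕ) : homAux χ s (n + 1) n = ModuleCat.ofHom (hLin χ s n) := by
  simp [homAux]
  rfl

lemma homAux_ne (i j : ℕ) (h : i ≠ j + 1) : homAux χ s i j = 0 := by
  simp only [homAux]
  rw [dif_neg h]

/-- The chain homotopy between the identity and `(χ s)⁻¹ • identity` on the complex of
inhomogeneous cochains of `charRep χ`. -/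
noncomputable def myHomotopy :
    Homotopy (𝟙 (groupCohomology.inhomogeneousCochains (charRep χ)))
      ((((χ s)⁻¹ : ℂˣ) : ℂ) • 𝟙 (groupCohomology.inhomogeneousCochains (charRep χ))) where
  hom i j := homAux χ s i j
  zero i j hn := homAux_ne χ s i j (fun h => hn (by subst h; rfl))
  comm i := by
    rcases i with _ | k
    · rw [dNext_eq _ (show (ComplexShape.up ℕ).Rel 0 (0 + 1) from rfl), prevD_nat]
      simp only [homAux_succ, homAux_ne χ s 0 (0 - 1) (by omega), zero_comp, add_zero]
      rw [CochainComplex.of_d]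
      apply ModuleCat.hom_ext
      apply LinearMap.ext
      intro φ
      funext x
      exact final_zero χ s φ x
    · rw [dNext_eq _ (show (ComplexShape.up ℕ).Rel (k + 1) (k + 1 + 1) from rfl), prevD_nat]
      rw [show k + 1 - 1 = k from rfl]
      simp only [homAux_succ]
      rw [CochainComplex.of_d, CochainComplex.of_d]
      apply ModuleCat.hom_ext
      apply LinearMap.ext
      intro φ
      funext x
      exact final_succ χ s k φ x

end Glue

lemma my_homologyMap_smul {K L : HomologicalComplex (ModuleCat ℂ) (ComplexShape.up ℕ)}
    (f : K ⟶ L) (r : ℂ) (i : ℕ) :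
    HomologicalComplex.homologyMap (r • f) i = r • HomologicalComplex.homologyMap f i := by
  dsimp only [HomologicalComplex.homologyMap]
  have h : (HomologicalComplex.shortComplexFunctor (ModuleCat ℂ) (ComplexShape.up ℕ) i).map (r • f)
      = r • (HomologicalComplex.shortComplexFunctor (ModuleCat ℂ) (ComplexShape.up ℕ) i).map f := by
    ext <;> rfl
  rw [h, ShortComplex.homologyMap_smul]
  rfl

/-- Let `A` be the free abelian group of rank `d` (written multiplicatively)
and let `χ : A → ℂˣ` be a nontrivial group homomorphism.  Then the group cohomology
`H^i(A, ℂ_χ)` of `A` with coefficients in the one-dimensional representation `ℂ_χ` vanishes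
for every `i ≥ 0`. -/
theorem groupCohomology_freeAbelian_nontrivial_char_eq_zero (d : ℕ)
    (χ : (Fin d → Multiplicative ℤ) →* ℂˣ) (hχ : χ ≠ 1) (i : ℕ) :
    Subsingleton (groupCohomology (charRep χ) i) := by
  obtain ⟨s, hs⟩ : ∃ s, χ s ≠ 1 := by
    by_contra h
    push_neg at h
    exact hχ (MonoidHom.ext fun a => by rw [h a]; rfl)
  have h1 := (myHomotopy χ s).homologyMap_eq i
  rw [HomologicalComplex.homologyMap_id, my_homologyMap_smul,
    HomologicalComplex.homologyMap_id] at h1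
  have hc : (((χ s)⁻¹ : ℂˣ) : ℂ) ≠ 1 := by
    intro h
    exact hs (by simpa [inv_eq_one] using (Units.ext (α := ℂ) (by simpa using h) :
      ((χ s)⁻¹ : ℂˣ) = 1))
  have hz : ∀ z : ((groupCohomology.inhomogeneousCochains (charRep χ)).homology i), z = 0 := by
    intro z
    have key : z = (((χ s)⁻¹ : ℂˣ) : ℂ) • z := by
      conv_lhs => rw [← ModuleCat.id_apply _ z, h1]
      exact LinearMap.smul_apply _ _ _
    have h2 : ((1 : ℂ) - (((χ s)⁻¹ : ℂˣ) : ℂ)) • z = 0 := by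
      rw [sub_smul, one_smul, ← key, sub_self]
    rcases smul_eq_zero.mp h2 with h3 | h3
    · exact absurd (by linear_combination -h3) hc
    · exact h3
  exact ⟨fun a b => by rw [hz a, hz b]⟩
end

section
/- Let A be the free abelian group of rank d (realized as Fin d → ℤ, written multiplicatively), let V be a finite-dimensional ℂ-linear representation of A, and let χ : A → ℂˣ be a group homomorphism with associated one-dimensional representation ℂ_χ. Then there exists a nonzero A-equivariant linear map V → ℂ_χ (i.e. χ appears as a quotient of V) if and only if there exists a nonzero A-equivariant linear map ℂ_χ → V (i.e. χ appears as a subrepresentation of V). -/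
open LinearMap Module Submodule

variable {K : Type*} [Field K] {V : Type*} [AddCommGroup V] [Module K V]

/-- If `f` is nilpotent, `p` is `f`-invariant and `ker f ⊓ p = ⊥`, then `p = ⊥`. -/
lemma aux_nilp_ker {f : Module.End K V} (hf : IsNilpotent f) {p : Submodule K V}
    (hp : ∀ x ∈ p, f x ∈ p) (h : Disjoint (LinearMap.ker f) p) : p = ⊥ := by
  obtain ⟨m, hm⟩ := hf
  have key : ∀ k : ℕ, ∀ x ∈ p, (f ^ k) x = 0 → x = 0 := by
    intro k
    induction k with
    | zero => intro x _ hx; simpa using hx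
    | succ k ih =>
      intro x hx hfx
      have hfx0 : f x = 0 := by
        refine ih (f x) (hp x hx) ?_
        have : (f ^ (k + 1)) x = (f ^ k) (f x) := by
          rw [pow_succ]; rfl
        rw [← this, hfx]
      have hmem : x ∈ LinearMap.ker f ⊓ p := ⟨hfx0, hx⟩
      rw [disjoint_iff.mp h] at hmem
      simpa using hmem
  rw [eq_bot_iff]
  intro x hx
  exact key m x hx (by rw [hm]; rfl)

/-- If `f` is nilpotent, `p` is `f`-invariant and `range f ⊔ p = ⊤`, then `p = ⊤`. -/
lemma aux_nilp_range {f : Module.End K V} (hf : IsNilpotent f) {p : Submodule K V}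
    (hp : ∀ x ∈ p, f x ∈ p) (h : LinearMap.range f ⊔ p = ⊤) : p = ⊤ := by
  obtain ⟨m, hm⟩ := hf
  have hmap : Submodule.map f p ≤ p := by
    rintro y ⟨x, hx, rfl⟩; exact hp x hx
  have key : ∀ k : ℕ, LinearMap.range (f ^ k) ⊔ p = ⊤ := by
    intro k
    induction k with
    | zero => rw [pow_zero, Module.End.one_eq_id, LinearMap.range_id]; exact top_sup_eq p
    | succ k ih =>
      refine le_antisymm le_top ?_
      have : (⊤ : Submodule K V) = Submodule.map f (LinearMap.range (f ^ k) ⊔ p) ⊔ p := by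
        rw [ih, Submodule.map_top, h]
      rw [this, Submodule.map_sup]
      have h1 : Submodule.map f (LinearMap.range (f ^ k)) = LinearMap.range (f ^ (k + 1)) := by
        rw [pow_succ']
        exact (LinearMap.range_comp _ _).symm
      rw [h1]
      exact sup_le (sup_le le_sup_left (le_sup_of_le_right hmap)) le_sup_right
  have := key m
  rw [hm] at this
  simpa using this

section family
variable {ι : Type*} [DecidableEq ι]

lemma aux_nilp_family_ker (s : Finset ι) (N : ι → Module.End K V)
    (hcomm : ∀ i j, Commute (N i) (N j))
    (hnil : ∀ i, IsNilpotent (N i))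
    (h : (⨅ i ∈ s, LinearMap.ker (N i)) = ⊥) : Subsingleton V := by
  induction s using Finset.induction_on with
  | empty =>
    simp at h
    refine ⟨fun x y => ?_⟩
    have hx : x ∈ (⊤ : Submodule K V) := trivial
    have hy : y ∈ (⊤ : Submodule K V) := trivial
    rw [h] at hx hy
    simp only [Submodule.mem_bot] at hx hy
    rw [hx, hy]
  | @insert a s ha ih =>
    rw [Finset.iInf_insert] at h
    have hpinv : ∀ x ∈ (⨅ i ∈ s, LinearMap.ker (N i)), N a x ∈ ⨅ i ∈ s, LinearMap.ker (N i) := by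
      intro x hx
      simp only [Submodule.mem_iInf] at hx ⊢
      intro i hi
      have : N i (N a x) = N a (N i x) := by
        rw [← Module.End.mul_apply, ← Module.End.mul_apply, (hcomm i a).eq]
      simp only [LinearMap.mem_ker] at hx ⊢
      rw [this, hx i hi, map_zero]
    have := aux_nilp_ker (hnil a) hpinv (disjoint_iff.mpr h)
    exact ih this

lemma aux_nilp_family_range (s : Finset ι) (N : ι → Module.End K V)
    (hcomm : ∀ i j, Commute (N i) (N j))
    (hnil : ∀ i, IsNilpotent (N i))
    (h : (⨆ i ∈ s, LinearMap.range (N i)) = ⊤) : Subsingleton V := by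
  induction s using Finset.induction_on with
  | empty =>
    simp at h
    refine ⟨fun x y => ?_⟩
    have hx : x ∈ (⊥ : Submodule K V) := h ▸ trivial
    have hy : y ∈ (⊥ : Submodule K V) := h ▸ trivial
    simp only [Submodule.mem_bot] at hx hy
    rw [hx, hy]
  | @insert a s ha ih =>
    rw [Finset.iSup_insert] at h
    have hpinv : ∀ x ∈ (⨆ i ∈ s, LinearMap.range (N i)),
        N a x ∈ ⨆ i ∈ s, LinearMap.range (N i) := by
      intro x hx
      have hle : (⨆ i ∈ s, LinearMap.range (N i)) ≤
          Submodule.comap (N a) (⨆ i ∈ s, LinearMap.range (N i)) := by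
        refine iSup₂_le fun i hi => ?_
        rintro y ⟨z, rfl⟩
        simp only [Submodule.mem_comap]
        have : N a (N i z) = N i (N a z) := by
          rw [← Module.End.mul_apply, ← Module.End.mul_apply, (hcomm a i).eq]
        rw [this]
        have hm : N i (N a z) ∈ LinearMap.range (N i) := LinearMap.mem_range_self _ _
        exact le_iSup₂ (f := fun i (_ : i ∈ s) => LinearMap.range (N i)) i hi hm
      exact hle hx
    have := aux_nilp_range (hnil a) hpinv h
    exact ih this

end family

open Module in
lemma key_aux {ι : Type*} [Fintype ι] [DecidableEq ι] :
    ∀ (n : ℕ) (W : Type w) (_ : AddCommGroup W) (_ : Module K W) (_ : FiniteDimensional K W)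
      (N : ι → Module.End K W), finrank K W ≤ n → (∀ i j, Commute (N i) (N j)) →
      ((⨅ i, LinearMap.ker (N i)) = ⊥ ↔ (⨆ i, LinearMap.range (N i)) = ⊤) := by
  intro n
  induction n with
  | zero =>
    intro W _ _ _ N hn _
    have hsub : Subsingleton W := finrank_zero_iff.mp (Nat.le_zero.mp hn)
    exact iff_of_true (Subsingleton.elim _ _) (Subsingleton.elim _ _)
  | succ n ih =>
    intro W _ _ _ N hn hcomm
    by_cases hW : Subsingleton W
    · exact iff_of_true (Subsingleton.elim _ _) (Subsingleton.elim _ _)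
    by_cases hnil : ∀ i, IsNilpotent (N i)
    · refine iff_of_false (fun h => hW ?_) (fun h => hW ?_)
      · exact aux_nilp_family_ker Finset.univ N hcomm hnil
          (by simpa [Finset.mem_univ, iInf_true] using h)
      · exact aux_nilp_family_range Finset.univ N hcomm hnil
          (by simpa [Finset.mem_univ, iSup_true] using h)
    push_neg at hnil
    obtain ⟨i₀, hi₀⟩ := hnil
    have hW' : Nontrivial W := not_subsingleton_iff_nontrivial.mp hW
    set m := finrank K W with hm
    have hm1 : 1 ≤ m := finrank_pos
    set a := N i₀ with ha
    set Ks := LinearMap.ker (a ^ m) with hKsdef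
    set R := LinearMap.range (a ^ m) with hRdef
    -- disjointness
    have hdisj : Disjoint Ks R := by
      rw [disjoint_iff, eq_bot_iff]
      rintro x ⟨hxK, y, rfl⟩
      have hy : y ∈ LinearMap.ker (a ^ (m + m)) := by
        rw [LinearMap.mem_ker, pow_add, Module.End.mul_apply]
        exact hxK
      rw [Module.End.ker_pow_eq_ker_pow_finrank_of_le (by omega)] at hy
      rw [← hm] at hy
      simpa using hy
    have hrk : finrank K R + finrank K Ks = finrank K W :=
      LinearMap.finrank_range_add_finrank_ker (a ^ m)
    have hcodis : Ks ⊔ R = ⊤ := by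
      have h2 := Submodule.finrank_sup_add_finrank_inf_eq Ks R
      rw [disjoint_iff.mp hdisj, finrank_bot] at h2
      exact Submodule.eq_top_of_finrank_eq (by omega)
    have hRne : R ≠ ⊥ := fun h => hi₀ ⟨m, LinearMap.range_eq_bot.mp h⟩
    have hRpos : 1 ≤ finrank K R := by
      rcases Nat.eq_zero_or_pos (finrank K R) with h | h
      · exact absurd (Submodule.finrank_eq_zero.mp h) hRne
      · exact h
    have hKrk : finrank K Ks ≤ n := by omega
    -- invariance
    have hKinv : ∀ i, ∀ x ∈ Ks, N i x ∈ Ks := by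
      intro i x hx
      have hc : (a ^ m) * N i = N i * (a ^ m) := ((hcomm i₀ i).pow_left m).eq
      rw [hKsdef, LinearMap.mem_ker] at hx ⊢
      rw [← Module.End.mul_apply, hc, Module.End.mul_apply, hx, map_zero]
    have hRinv : ∀ i, Submodule.map (N i) R ≤ R := by
      rintro i y ⟨x, ⟨z, rfl⟩, rfl⟩
      refine ⟨N i z, ?_⟩
      rw [← Module.End.mul_apply, ← Module.End.mul_apply, ((hcomm i₀ i).pow_left m).eq]
    set N' : ι → Module.End K Ks := fun i => (N i).restrict (hKinv i) with hN'
    have hcomm' : ∀ i j, Commute (N' i) (N' j) := by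
      intro i j
      apply LinearMap.ext
      intro x
      apply Subtype.ext
      have := LinearMap.ext_iff.mp ((hcomm i j).eq) x.1
      simpa [hN', Module.End.mul_apply, LinearMap.restrict_coe_apply] using this
    have IH := ih Ks inferInstance inferInstance inferInstance N' hKrk hcomm'
    -- transfer of the kernel condition
    have L1 : (⨅ i, LinearMap.ker (N i)) = ⊥ ↔ (⨅ i, LinearMap.ker (N' i)) = ⊥ := by
      constructor
      · intro h
        rw [eq_bot_iff]
        rintro ⟨x, hxK⟩ hx
        rw [Submodule.mem_iInf] at hx
        have hx0 : x ∈ ⨅ i, LinearMap.ker (N i) := by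
          rw [Submodule.mem_iInf]
          intro i
          have := hx i
          rw [LinearMap.mem_ker] at this ⊢
          exact congrArg Subtype.val this
        rw [h] at hx0
        simp only [Submodule.mem_bot] at hx0
        simp only [Submodule.mem_bot]
        exact Subtype.ext (by simpa using hx0)
      · intro h
        rw [eq_bot_iff]
        intro x hx
        rw [Submodule.mem_iInf] at hx
        have hxK : x ∈ Ks := by
          have hxa : a x = 0 := hx i₀
          rw [hKsdef, LinearMap.mem_ker]
          have hpow : a ^ m = a ^ (m - 1) * a := by
            rw [← pow_succ]
            congr 1
            omega
          rw [hpow, Module.End.mul_apply, hxa, map_zero]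
        have hmem : (⟨x, hxK⟩ : Ks) ∈ ⨅ i, LinearMap.ker (N' i) := by
          rw [Submodule.mem_iInf]
          intro i
          rw [LinearMap.mem_ker]
          apply Subtype.ext
          simpa [hN', LinearMap.restrict_coe_apply] using hx i
        rw [h] at hmem
        simp only [Submodule.mem_bot] at hmem
        simpa using congrArg Subtype.val hmem
    -- transfer of the range condition
    have hmapNK : ∀ i, Submodule.map Ks.subtype (LinearMap.range (N' i))
        = Submodule.map (N i) Ks := by
      intro i
      ext y
      simp only [Submodule.mem_map, LinearMap.mem_range]
      constructor
      · rintro ⟨z, ⟨w, rfl⟩, rfl⟩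
        exact ⟨w.1, w.2, rfl⟩
      · rintro ⟨x, hx, rfl⟩
        exact ⟨N' i ⟨x, hx⟩, ⟨⟨x, hx⟩, rfl⟩, rfl⟩
    have hX : Submodule.map Ks.subtype (⨆ i, LinearMap.range (N' i))
        = ⨆ i, Submodule.map (N i) Ks := by
      rw [Submodule.map_iSup]
      exact iSup_congr hmapNK
    have iff2 : (⨆ i, LinearMap.range (N' i)) = ⊤ ↔ (⨆ i, Submodule.map (N i) Ks) = Ks := by
      constructor
      · intro h
        rw [← hX, h, Submodule.map_subtype_top]
      · intro h
        apply Submodule.map_injective_of_injective Ks.injective_subtype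
        rw [hX, h, Submodule.map_subtype_top]
    have StepB : (⨆ i, LinearMap.range (N i)) = (⨆ i, Submodule.map (N i) Ks) ⊔ R := by
      apply le_antisymm
      · refine iSup_le fun i => ?_
        have hr : LinearMap.range (N i) = Submodule.map (N i) Ks ⊔ Submodule.map (N i) R := by
          rw [← Submodule.map_sup, hcodis, Submodule.map_top]
        rw [hr]
        exact sup_le (le_sup_of_le_left (le_iSup (fun i => Submodule.map (N i) Ks) i)) (le_sup_of_le_right (hRinv i))
      · refine sup_le (iSup_le fun i => le_iSup_of_le i LinearMap.map_le_range) ?_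
        refine le_iSup_of_le i₀ ?_
        rintro y ⟨z, rfl⟩
        have hpow : a ^ m = a * a ^ (m - 1) := by
          rw [← pow_succ']
          congr 1
          omega
        rw [hpow, Module.End.mul_apply]
        exact ⟨(a ^ (m - 1)) z, rfl⟩
    have StepC : (⨆ i, Submodule.map (N i) Ks) ⊔ R = ⊤
        ↔ (⨆ i, Submodule.map (N i) Ks) = Ks := by
      have hXle : (⨆ i, Submodule.map (N i) Ks) ≤ Ks :=
        iSup_le fun i => Submodule.map_le_iff_le_comap.mpr fun x hx => hKinv i x hx
      constructor
      · intro h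
        have hmod : ((⨆ i, Submodule.map (N i) Ks) ⊔ R) ⊓ Ks
            = (⨆ i, Submodule.map (N i) Ks) ⊔ (R ⊓ Ks) := sup_inf_assoc_of_le _ hXle
        rw [h, top_inf_eq, inf_comm, disjoint_iff.mp hdisj, sup_bot_eq] at hmod
        exact hmod.symm
      · intro h
        rw [h]
        exact hcodis
    calc (⨅ i, LinearMap.ker (N i)) = ⊥ ↔ (⨅ i, LinearMap.ker (N' i)) = ⊥ := L1
      _ ↔ (⨆ i, LinearMap.range (N' i)) = ⊤ := IH
      _ ↔ (⨆ i, Submodule.map (N i) Ks) = Ks := iff2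
      _ ↔ (⨆ i, Submodule.map (N i) Ks) ⊔ R = ⊤ := StepC.symm
      _ ↔ (⨆ i, LinearMap.range (N i)) = ⊤ := by rw [StepB]

open Module in
/-- For a commuting family of endomorphisms of a finite-dimensional vector space,
the joint kernel is nonzero iff the sum of the ranges is proper. -/
lemma key {ι : Type*} [Fintype ι] [DecidableEq ι] {W : Type w} [AddCommGroup W] [Module K W]
    [FiniteDimensional K W] (N : ι → Module.End K W) (hcomm : ∀ i j, Commute (N i) (N j)) :
    ((⨅ i, LinearMap.ker (N i)) = ⊥ ↔ (⨆ i, LinearMap.range (N i)) = ⊤) :=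
  key_aux (finrank K W) W inferInstance inferInstance inferInstance N le_rfl hcomm

section repglue
open Module

/-- The standard generators of the free abelian group `Fin d → Multiplicative ℤ`. -/
def genA {d : ℕ} (i : Fin d) : Fin d → Multiplicative ℤ :=
  Pi.mulSingle i (Multiplicative.ofAdd (1 : ℤ))

lemma subgroup_all {d : ℕ} (S : Subgroup (Fin d → Multiplicative ℤ))
    (hS : ∀ i, genA i ∈ S) (a : Fin d → Multiplicative ℤ) : a ∈ S := by
  have ha : a = ∏ i, Pi.mulSingle i (a i) := (Finset.univ_prod_mulSingle a).symm
  rw [ha]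
  refine Subgroup.prod_mem S fun i _ => ?_
  have h2 : a i = Multiplicative.ofAdd (1 : ℤ) ^ (Multiplicative.toAdd (a i)) := by
    rw [← ofAdd_zsmul, smul_eq_mul, mul_one, ofAdd_toAdd]
  have h3 : Pi.mulSingle i (a i) = genA i ^ (Multiplicative.toAdd (a i)) := by
    conv_lhs => rw [h2]
    exact map_zpow (MonoidHom.mulSingle (fun _ => Multiplicative ℤ) i) _ _
  rw [h3]
  exact zpow_mem (hS i) _

end repglue


/-- Let `A` be the free abelian group of rank `d` (written multiplicatively),
let `V` be a finite-dimensional `ℂ`-linear representation of `A`, and let `χ : A → ℂˣ` be a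
group homomorphism with associated one-dimensional representation `ℂ_χ`.  Then `χ` appears as a
quotient of `V` (there is a nonzero `A`-equivariant map `V → ℂ_χ`) if and only if `χ` appears
as a subrepresentation of `V` (there is a nonzero `A`-equivariant map `ℂ_χ → V`). -/
theorem char_quotient_iff_char_sub (d : ℕ)
    (V : Rep ℂ (Fin d → Multiplicative ℤ)) [FiniteDimensional ℂ V]
    (χ : (Fin d → Multiplicative ℤ) →* ℂˣ) :
    (∃ f : V ⟶ charRep χ, f ≠ 0) ↔ (∃ f : charRep χ ⟶ V, f ≠ 0) := by
  classical
  let N : Fin d → Module.End ℂ V := fun i =>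
    V.ρ (genA i) - ((χ (genA i) : ℂ) • (1 : Module.End ℂ V))
  have hcomm : ∀ i j, Commute (N i) (N j) := by
    intro i j
    have h1 : Commute (V.ρ (genA i)) (V.ρ (genA j)) := by
      unfold Commute SemiconjBy
      rw [← map_mul, ← map_mul, mul_comm]
    have h2 : Commute (V.ρ (genA i)) ((χ (genA j) : ℂ) • (1 : Module.End ℂ V)) :=
      (Commute.one_right (V.ρ (genA i))).smul_right _
    have h3 : Commute ((χ (genA i) : ℂ) • (1 : Module.End ℂ V)) (V.ρ (genA j)) :=
      (Commute.one_left (V.ρ (genA j))).smul_left _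
    have h4 : Commute ((χ (genA i) : ℂ) • (1 : Module.End ℂ V))
        ((χ (genA j) : ℂ) • (1 : Module.End ℂ V)) :=
      ((Commute.refl 1).smul_left _).smul_right _
    exact Commute.sub_left (h1.sub_right h2) (h3.sub_right h4)
  have hsub : (∃ f : charRep χ ⟶ V, f ≠ 0) ↔ (⨅ i, LinearMap.ker (N i)) ≠ ⊥ := by
    constructor
    · rintro ⟨f, hf⟩ hbot
      set v : V := f.hom (1 : ℂ) with hv
      have hlin : ∀ x : ℂ, f.hom x = x • v := by
        intro x
        exact (congrArg f.hom (show (show charRep χ from x) = x • (show charRep χ from (1 : ℂ))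
          from (mul_one x).symm)).trans (map_smul f.hom x (show charRep χ from (1 : ℂ)))
      have hv0 : v ≠ 0 := by
        intro h0
        apply hf
        apply Rep.hom_ext
        refine Representation.IntertwiningMap.ext (LinearMap.ext fun x => ?_)
        show f.hom x = (0 : charRep χ ⟶ V).hom x
        rw [hlin x, h0]
        exact smul_zero (show ℂ from x)
      have hmem : v ∈ ⨅ i, LinearMap.ker (N i) := by
        rw [Submodule.mem_iInf]
        intro i
        rw [LinearMap.mem_ker]
        have hc := Rep.hom_comm_apply f (genA i) (1 : ℂ)
        have hl : (charRep χ).ρ (genA i) (1 : ℂ) = (χ (genA i) : ℂ) := by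
          show (χ (genA i) : ℂ) * 1 = _
          ring
        rw [hl, hlin] at hc
        show V.ρ (genA i) v - (χ (genA i) : ℂ) • v = 0
        rw [← hc]
        simp [smul_eq_mul]
      rw [hbot] at hmem
      exact hv0 (by simpa using hmem)
    · intro hne
      obtain ⟨v, hvmem, hv0⟩ := (Submodule.ne_bot_iff _).mp hne
      have hgen : ∀ i, V.ρ (genA i) v = (χ (genA i) : ℂ) • v := by
        intro i
        have h1 := (Submodule.mem_iInf _).mp hvmem i
        rw [LinearMap.mem_ker] at h1
        have h2 : V.ρ (genA i) v - (χ (genA i) : ℂ) • v = 0 := by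
          simpa [N] using h1
        exact sub_eq_zero.mp h2
      let S : Subgroup (Fin d → Multiplicative ℤ) :=
        { carrier := {g | V.ρ g v = (χ g : ℂ) • v}
          one_mem' := by simp
          mul_mem' := by
            intro g h hg hh
            simp only [Set.mem_setOf_eq] at hg hh ⊢
            rw [map_mul, Module.End.mul_apply, hh, map_smul, hg, smul_smul, map_mul,
              Units.val_mul, mul_comm]
          inv_mem' := by
            intro g hg
            simp only [Set.mem_setOf_eq] at hg ⊢
            have h1 : v = (χ g : ℂ) • (V.ρ g⁻¹ v) := by
              conv_lhs => rw [← Representation.inv_self_apply V.ρ g v]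
              rw [hg, map_smul]
            have hne0 : (χ g : ℂ) ≠ 0 := Units.ne_zero (χ g)
            have hcoe : ((χ g⁻¹ : ℂˣ) : ℂ) = ((χ g : ℂ))⁻¹ := by
              rw [map_inv, Units.val_inv_eq_inv_val]
            rw [hcoe]
            conv_rhs => rw [h1]
            rw [smul_smul, inv_mul_cancel₀ hne0, one_smul]
        }
      have hall : ∀ g, V.ρ g v = (χ g : ℂ) • v := fun g => subgroup_all S hgen g
      refine ⟨CategoryTheory.ConcreteCategory.ofHom (C := Rep ℂ _) ⟨LinearMap.toSpanSingleton ℂ V v, fun g => ?_⟩, fun h0 => ?_⟩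
      · refine LinearMap.ext fun (x : ℂ) => ?_
        show ((χ g : ℂ) * x) • v = V.ρ g (x • v)
        rw [map_smul, hall g, smul_smul, mul_comm]
      · have h2 : LinearMap.toSpanSingleton ℂ V v = 0 := by
          have h3 := congrArg (fun f => (Rep.Hom.hom f).toLinearMap) h0
          exact h3
        have h1 := congrFun (congrArg DFunLike.coe h2) (1 : ℂ)
        rw [LinearMap.toSpanSingleton_apply, one_smul] at h1
        exact hv0 (by simpa using h1)
  have hquot : (∃ f : V ⟶ charRep χ, f ≠ 0) ↔ (⨆ i, LinearMap.range (N i)) ≠ ⊤ := by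
    constructor
    · rintro ⟨f, hf⟩ htop
      apply hf
      let φ0 : Module.Dual ℂ V := f.hom.toLinearMap
      have hker : ∀ i, LinearMap.range (N i) ≤ LinearMap.ker φ0 := by
        rintro i y ⟨w, rfl⟩
        rw [LinearMap.mem_ker]
        have hc : φ0 (V.ρ (genA i) w) = (χ (genA i) : ℂ) * φ0 w :=
          Rep.hom_comm_apply f (genA i) w
        show φ0 (V.ρ (genA i) w - (χ (genA i) : ℂ) • w) = 0
        rw [map_sub, map_smul, hc, smul_eq_mul, sub_self]
      have hker2 : LinearMap.ker φ0 = ⊤ :=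
        top_unique (htop ▸ iSup_le hker)
      apply Rep.hom_ext
      apply Representation.IntertwiningMap.ext
      rw [Rep.zero_hom]
      exact LinearMap.ker_eq_top.mp hker2
    · intro hne
      set p := ⨆ i, LinearMap.range (N i) with hp
      obtain ⟨x, hx⟩ : ∃ x : V, x ∉ p := by
        by_contra h
        push_neg at h
        exact hne (eq_top_iff'.mpr h)
      have hq0 : p.mkQ x ≠ 0 := fun h => hx ((Submodule.Quotient.mk_eq_zero p).mp h)
      obtain ⟨ψ, hψ⟩ : ∃ ψ : Module.Dual ℂ (V ⧸ p), ψ (p.mkQ x) ≠ 0 := by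
        by_contra h
        push_neg at h
        exact hq0 ((Module.forall_dual_apply_eq_zero_iff ℂ _).mp h)
      set φ : V →ₗ[ℂ] ℂ := ψ ∘ₗ p.mkQ with hφ
      have hφgen : ∀ i w, φ (V.ρ (genA i) w) = (χ (genA i) : ℂ) * φ w := by
        intro i w
        have hmem : N i w ∈ p :=
          (le_iSup (fun i => LinearMap.range (N i)) i) ⟨w, rfl⟩
        have h0 : φ (N i w) = 0 := by
          have hz : p.mkQ (N i w) = 0 := (Submodule.Quotient.mk_eq_zero p).mpr hmem
          show ψ (p.mkQ (N i w)) = 0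
          rw [hz, map_zero]
        have hexp : φ (N i w) = φ (V.ρ (genA i) w) - (χ (genA i) : ℂ) * φ w := by
          show φ (V.ρ (genA i) w - (χ (genA i) : ℂ) • w) = _
          rw [map_sub, map_smul, smul_eq_mul]
        rw [hexp] at h0
        exact sub_eq_zero.mp h0
      let S : Subgroup (Fin d → Multiplicative ℤ) :=
        { carrier := {g | ∀ w, φ (V.ρ g w) = (χ g : ℂ) * φ w}
          one_mem' := by simp
          mul_mem' := by
            intro g h hg hh
            simp only [Set.mem_setOf_eq] at hg hh ⊢
            intro w
            rw [map_mul, Module.End.mul_apply, hg, hh, map_mul, Units.val_mul, mul_assoc]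
          inv_mem' := by
            intro g hg
            simp only [Set.mem_setOf_eq] at hg ⊢
            intro w
            have h1 := hg (V.ρ g⁻¹ w)
            rw [Representation.self_inv_apply V.ρ g w] at h1
            have hne0 : (χ g : ℂ) ≠ 0 := Units.ne_zero (χ g)
            have hcoe : ((χ g⁻¹ : ℂˣ) : ℂ) = ((χ g : ℂ))⁻¹ := by
              rw [map_inv, Units.val_inv_eq_inv_val]
            rw [hcoe, h1, ← mul_assoc, inv_mul_cancel₀ hne0, one_mul]
        }
      have hall : ∀ g, ∀ w, φ (V.ρ g w) = (χ g : ℂ) * φ w :=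
        fun g => subgroup_all S (fun i => hφgen i) g
      refine ⟨CategoryTheory.ConcreteCategory.ofHom (C := Rep ℂ _) ⟨φ, fun g => ?_⟩, fun h0 => ?_⟩
      · refine LinearMap.ext fun w => ?_
        show φ (V.ρ g w) = (χ g : ℂ) * φ w
        exact hall g w
      · have h1 : φ = 0 := by
          have := congrArg (fun f => (Rep.Hom.hom f).toLinearMap) h0
          exact this
        apply hψ
        have : φ x = 0 := by rw [h1]; rfl
        exact this
  rw [hquot, hsub]
  exact (not_iff_not.mpr (key N hcomm)).symm
end
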